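/- Let R be a commutative ring (e.g. R = ℝ) and a₀, a₁, a₂ ∈ R. Let S₂ be the 10×10 matrix over R whose nonzero entries (row, column indices 1..10) are: S₂[1,1] = 2a₀; S₂[2,3] = −a₁; S₂[2,4] = −a₂; S₂[3,1] = a₁; S₂[3,3] = a₀; S₂[4,1] = a₂; S₂[4,4] = a₀; S₂[5,5] = −2a₀; S₂[5,6] = −2a₁; S₂[5,7] = −2a₂; S₂[6,2] = a₁; S₂[6,6] = −a₀; S₂[6,8] = −a₁; S₂[6,9] = −a₂; S₂[7,2] = a₂; S₂[7,7] = −a₀; S₂[7,9] = −a₁; S₂[7,10] = −a₂; S₂[8,3] = 2a₁; S₂[9,3] = a₂; S₂[9,4] = a₁; S₂[10,4] = 2a₂. Let σ be the permutation of {1,…,10} sending (1,2,3,4,5,6,7,8,9,10) to the new ordering (5,6,7,2,8,9,10,3,4,1), and let P be the corresponding permutation matrix. Then P⁻¹ S₂ P is upper triangular with diagonal entries, in order, (−2a₀, −a₀, −a₀, 0, 0, 0, 0, a₀, a₀, 2a₀). -/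
import Mathlib


open Matrix

/-- The `10×10` matrix `S₍₂₎` appearing in the subprincipal operator of the
linearized gauge-fixed Einstein operator on symmetric 2-tensors at the conormal
bundle of the event horizon, for arbitrary parameters `a₀, a₁, a₂`. -/
def kerrS2 (R : Type*) [CommRing R] (a₀ a₁ a₂ : R) :
    Matrix (Fin 10) (Fin 10) R :=
  !![2*a₀, 0, 0, 0, 0, 0, 0, 0, 0, 0;
     0, 0, -a₁, -a₂, 0, 0, 0, 0, 0, 0;
     a₁, 0, a₀, 0, 0, 0, 0, 0, 0, 0;
     a₂, 0, 0, a₀, 0, 0, 0, 0, 0, 0;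
     0, 0, 0, 0, -(2*a₀), -(2*a₁), -(2*a₂), 0, 0, 0;
     0, a₁, 0, 0, 0, -a₀, 0, -a₁, -a₂, 0;
     0, a₂, 0, 0, 0, 0, -a₀, 0, -a₁, -a₂;
     0, 0, 2*a₁, 0, 0, 0, 0, 0, 0, 0;
     0, 0, a₂, a₁, 0, 0, 0, 0, 0, 0;
     0, 0, 0, 2*a₂, 0, 0, 0, 0, 0, 0]

/-- The reordering `(1,…,10) ↦ (5,6,7,2,8,9,10,3,4,1)` of the basis
(0-indexed: `i ↦ σf i`). -/
def kerrS2reorder : Fin 10 → Fin 10 := ![4, 5, 6, 1, 7, 8, 9, 2, 3, 0]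

/-- The permutation matrix corresponding to the reordering
`(1,…,10) ↦ (5,6,7,2,8,9,10,3,4,1)`. -/
def kerrS2perm (R : Type*) [CommRing R] : Matrix (Fin 10) (Fin 10) R :=
  Matrix.of fun i j => if i = kerrS2reorder j then 1 else 0

/-- The reordering as an `Equiv.Perm (Fin 10)`. -/
def kerrS2equiv : Equiv.Perm (Fin 10) where
  toFun := kerrS2reorder
  invFun := ![9, 3, 7, 8, 0, 1, 2, 4, 5, 6]
  left_inv := by decide
  right_inv := by decide

lemma kerrS2perm_eq (R : Type*) [CommRing R] :
    kerrS2perm R = (kerrS2equiv.symm.toPEquiv.toMatrix : Matrix (Fin 10) (Fin 10) R) := by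
  ext i j
  fin_cases i <;> fin_cases j <;> rfl

lemma kerrS2perm_transpose (R : Type*) [CommRing R] :
    (kerrS2perm R)ᵀ = (kerrS2equiv.toPEquiv.toMatrix : Matrix (Fin 10) (Fin 10) R) := by
  rw [kerrS2perm_eq, ← PEquiv.toMatrix_symm, ← Equiv.toPEquiv_symm, Equiv.symm_symm]

lemma kerrS2perm_mul_transpose (R : Type*) [CommRing R] :
    kerrS2perm R * (kerrS2perm R)ᵀ = 1 := by
  rw [kerrS2perm_transpose, kerrS2perm_eq, ← PEquiv.toMatrix_trans,
    ← Equiv.toPEquiv_trans, Equiv.symm_trans_self, Equiv.toPEquiv_refl,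
    PEquiv.toMatrix_refl]

lemma kerrS2perm_inv (R : Type*) [CommRing R] :
    (kerrS2perm R)⁻¹ = (kerrS2perm R)ᵀ :=
  Matrix.inv_eq_right_inv (kerrS2perm_mul_transpose R)

lemma kerrS2_conj_eq (R : Type*) [CommRing R] (a₀ a₁ a₂ : R) :
    (kerrS2perm R)⁻¹ * kerrS2 R a₀ a₁ a₂ * kerrS2perm R =
      (kerrS2 R a₀ a₁ a₂).submatrix kerrS2reorder kerrS2reorder := by
  rw [kerrS2perm_inv, kerrS2perm_transpose, kerrS2perm_eq,
    PEquiv.toMatrix_toPEquiv_mul, PEquiv.mul_toMatrix_toPEquiv,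
    Matrix.submatrix_submatrix]
  rfl

set_option maxRecDepth 8000 in
/-- Conjugating `S₍₂₎` by the permutation matrix corresponding to the new
ordering `(f₅, f₆, f₇, f₂, f₈, f₉, f₁₀, f₃, f₄, f₁)` yields an upper triangular
matrix with diagonal entries `(−2a₀, −a₀, −a₀, 0, 0, 0, 0, a₀, a₀, 2a₀)`. -/
theorem kerrS2_triangularization (R : Type*) [CommRing R] (a₀ a₁ a₂ : R) :
    let P := kerrS2perm R
    let T := P⁻¹ * kerrS2 R a₀ a₁ a₂ * P
    T.BlockTriangular (id : Fin 10 → Fin 10) ∧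
      Matrix.diag T = ![-(2*a₀), -a₀, -a₀, 0, 0, 0, 0, a₀, a₀, 2*a₀] := by
  intro P T
  have hP : P = kerrS2perm R := rfl
  have h2 : T = P⁻¹ * kerrS2 R a₀ a₁ a₂ * P := rfl
  rw [hP, kerrS2_conj_eq] at h2
  rw [h2]
  constructor
  · intro i j h
    fin_cases i <;> fin_cases j <;>
      first
        | exact absurd h (by decide)
        | rfl
  · ext i
    fin_cases i <;> rfl
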